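/- Let a > 0 and P = 0, and let M₁, M₂, M₃ : ℝ → ℝ be differentiable functions satisfying the reduced Fefferman equations M₁' = -M₂·M₃/a, M₂' = M₁·a·M₃, M₃' = (1/a - a)·M₁·M₂ on all of ℝ. If the light-like condition H_a(M₁(0), M₂(0), M₃(0), 0) = (1/2)(a·M₁(0)² + (1/a)·M₂(0)²) = 0 holds, then M₁(t) = M₂(t) = 0 and M₃(t) = M₃(0) for all t; i.e., the reduced solution is constant. -/

import Mathlib

/-- For `P = 0`, any light-like solution of the reduced Fefferman equations (i.e. one with
`H_a = (1/2)(a·M₁(0)² + (1/a)·M₂(0)²) = 0`) is constant: `M₁ ≡ 0`, `M₂ ≡ 0`, `M₃ ≡ M₃(0)`. -/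
theorem lightlike_P_zero_constant (a : ℝ) (ha : 0 < a) (M₁ M₂ M₃ : ℝ → ℝ)
    (h₁ : ∀ t, HasDerivAt M₁ (-(M₂ t) * (M₃ t / a)) t)
    (h₂ : ∀ t, HasDerivAt M₂ (M₁ t * (a * M₃ t)) t)
    (h₃ : ∀ t, HasDerivAt M₃ ((1/a - a) * M₁ t * M₂ t) t)
    (hH : (1/2) * (a * M₁ 0 ^ 2 + (1/a) * M₂ 0 ^ 2) = 0) :
    ∀ t : ℝ, M₁ t = 0 ∧ M₂ t = 0 ∧ M₃ t = M₃ 0 := by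
  have ha' : a ≠ 0 := ne_of_gt ha
  set E : ℝ → ℝ := fun t => a * M₁ t ^ 2 + (1/a) * M₂ t ^ 2 with hE
  have hEd : ∀ t, HasDerivAt E 0 t := by
    intro t
    have := (((h₁ t).pow 2).const_mul a).add (((h₂ t).pow 2).const_mul (1/a))
    have e1 : ((fun y => a * (M₁ ^ 2) y) + fun y => 1 / a * (M₂ ^ 2) y) = E := by
      funext y; simp [hE]
    rw [e1] at this
    refine this.congr_deriv ?_
    field_simp
    ring
  have hEconst : ∀ t, E t = E 0 := by
    intro t
    exact is_const_of_deriv_eq_zero (fun x => (hEd x).differentiableAt)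
      (fun x => (hEd x).deriv) t 0
  have hE0 : E 0 = 0 := by simp only [hE]; linarith [hH]
  have hM12 : ∀ t, M₁ t = 0 ∧ M₂ t = 0 := by
    intro t
    have h := hEconst t
    rw [hE0] at h
    have h1 : 0 ≤ a * M₁ t ^ 2 := by positivity
    have h2 : 0 ≤ (1/a) * M₂ t ^ 2 := by positivity
    have hm1 : a * M₁ t ^ 2 = 0 := by simp only [hE] at h; linarith
    have hm2 : (1/a) * M₂ t ^ 2 = 0 := by simp only [hE] at h; linarith
    constructor
    · have := mul_eq_zero.mp hm1
      rcases this with h | h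
      · exact absurd h ha'
      · exact pow_eq_zero_iff (n := 2) (by norm_num) |>.mp h
    · have := mul_eq_zero.mp hm2
      rcases this with h | h
      · exact absurd h (by positivity)
      · exact pow_eq_zero_iff (n := 2) (by norm_num) |>.mp h
  intro t
  refine ⟨(hM12 t).1, (hM12 t).2, ?_⟩
  have h3d : ∀ x, HasDerivAt M₃ 0 x := by
    intro x
    have := h₃ x
    rw [(hM12 x).1] at this
    simpa using this
  exact is_const_of_deriv_eq_zero (fun x => (h3d x).differentiableAt)
    (fun x => (h3d x).deriv) t 0
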